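/- Let S, Y_b, Y_f, X_f, X_b be discrete random variables such that Y_f ↔ X_b ↔ Y_b is a Markov chain. Then I(X_b; Y_b) ≥ I(Y_b, S; Y_f) − I(S; Y_f | Y_b) and hence I(X_b; Y_b) ≥ I(Y_b, S; Y_f) − H(S | Y_b). -/

import Mathlib

open Finset

structure FinProb (Ω : Type) [Fintype Ω] where
  p : Ω → ℝ
  nonneg : ∀ ω, 0 ≤ p ω
  sum_one : ∑ ω, p ω = 1

namespace FinProb

variable {Ω : Type} [Fintype Ω] (μ : FinProb Ω)

/-- P(X = x) -/
noncomputable def prob {α : Type} [DecidableEq α] (X : Ω → α) (x : α) : ℝ :=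
  ∑ ω, if X ω = x then μ.p ω else 0

/-- Shannon entropy (base 2) of a random variable. -/
noncomputable def H {α : Type} [Fintype α] [DecidableEq α] (X : Ω → α) : ℝ :=
  -∑ x, μ.prob X x * Real.logb 2 (μ.prob X x)

/-- Mutual information I(X;Y). -/
noncomputable def I {α β : Type} [Fintype α] [DecidableEq α] [Fintype β] [DecidableEq β]
    (X : Ω → α) (Y : Ω → β) : ℝ :=
  μ.H X + μ.H Y - μ.H (fun ω => (X ω, Y ω))

/-- Conditional entropy H(X|Z). -/
noncomputable def condH {α γ : Type} [Fintype α] [DecidableEq α] [Fintype γ] [DecidableEq γ]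
    (X : Ω → α) (Z : Ω → γ) : ℝ :=
  μ.H (fun ω => (X ω, Z ω)) - μ.H Z

/-- Conditional mutual information I(X;Y|Z). -/
noncomputable def condI {α β γ : Type} [Fintype α] [DecidableEq α] [Fintype β] [DecidableEq β]
    [Fintype γ] [DecidableEq γ] (X : Ω → α) (Y : Ω → β) (Z : Ω → γ) : ℝ :=
  μ.condH X Z + μ.condH Y Z - μ.condH (fun ω => (X ω, Y ω)) Z

/-- X and Y are conditionally independent given Z. -/
def CondIndep {α β γ : Type} [DecidableEq α] [DecidableEq β] [DecidableEq γ]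
    (X : Ω → α) (Y : Ω → β) (Z : Ω → γ) : Prop :=
  ∀ x y z, μ.prob (fun ω => (X ω, Y ω, Z ω)) (x, y, z) * μ.prob Z z
    = μ.prob (fun ω => (X ω, Z ω)) (x, z) * μ.prob (fun ω => (Y ω, Z ω)) (y, z)

/-- X and Y are independent. -/
def Indep {α β : Type} [DecidableEq α] [DecidableEq β] (X : Ω → α) (Y : Ω → β) : Prop :=
  ∀ x y, μ.prob (fun ω => (X ω, Y ω)) (x, y) = μ.prob X x * μ.prob Y y

end FinProb

/-- Binary entropy function (base 2). -/
noncomputable def binEnt (x : ℝ) : ℝ := -x * Real.logb 2 x - (1 - x) * Real.logb 2 (1 - x)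

set_option linter.unusedSectionVars false
namespace FinProb

variable {Ω : Type} [Fintype Ω] (μ : FinProb Ω)
variable {α β γ : Type} [Fintype α] [DecidableEq α] [Fintype β] [DecidableEq β]
  [Fintype γ] [DecidableEq γ]

lemma prob_nonneg (X : Ω → α) (x : α) : 0 ≤ μ.prob X x := by
  unfold prob
  apply Finset.sum_nonneg
  intro ω _
  split
  · exact μ.nonneg ω
  · exact le_refl 0

lemma sum_prob (X : Ω → α) : ∑ x, μ.prob X x = 1 := by
  unfold prob
  rw [Finset.sum_comm]
  simp [μ.sum_one]

lemma prob_comp_le (f : α → β) (X : Ω → α) (x : α) :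
    μ.prob X x ≤ μ.prob (fun ω => f (X ω)) (f x) := by
  unfold prob
  apply Finset.sum_le_sum
  intro ω _
  by_cases hx : X ω = x
  · simp [hx]
  · simp only [if_neg hx]
    split
    · exact μ.nonneg ω
    · exact le_refl 0

lemma prob_equiv (e : α ≃ β) (X : Ω → α) (x : α) :
    μ.prob (fun ω => e (X ω)) (e x) = μ.prob X x := by
  unfold prob
  refine Finset.sum_congr rfl fun ω _ => ?_
  simp [EmbeddingLike.apply_eq_iff_eq]

lemma H_equiv (e : α ≃ β) (X : Ω → α) :
    μ.H (fun ω => e (X ω)) = μ.H X := by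
  unfold H
  rw [← Equiv.sum_comp e
    (fun b => μ.prob (fun ω => e (X ω)) b * Real.logb 2 (μ.prob (fun ω => e (X ω)) b))]
  congr 1
  refine Finset.sum_congr rfl fun a _ => ?_
  rw [prob_equiv]

lemma H_swap (X : Ω → α) (Y : Ω → β) :
    μ.H (fun ω => (X ω, Y ω)) = μ.H (fun ω => (Y ω, X ω)) := by
  have h := μ.H_equiv (Equiv.prodComm β α) (fun ω => (Y ω, X ω))
  simpa using h

end FinProb
namespace FinProb

variable {Ω : Type} [Fintype Ω] (μ : FinProb Ω)
variable {α β γ : Type} [Fintype α] [DecidableEq α] [Fintype β] [DecidableEq β]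
  [Fintype γ] [DecidableEq γ]

lemma sum_prob_fst (X : Ω → α) (Z : Ω → γ) (z : γ) :
    ∑ x, μ.prob (fun ω => (X ω, Z ω)) (x, z) = μ.prob Z z := by
  unfold prob
  rw [Finset.sum_comm]
  refine Finset.sum_congr rfl fun ω _ => ?_
  rw [Finset.sum_eq_single (X ω)]
  · simp [Prod.ext_iff]
  · intro a _ ha
    rw [if_neg]
    intro hc
    exact ha (congrArg (fun p : α × γ => p.1) hc).symm
  · simp

lemma sum_prob_mid (X : Ω → α) (Y : Ω → β) (Z : Ω → γ) (x : α) (z : γ) :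
    ∑ y, μ.prob (fun ω => ((X ω, Y ω), Z ω)) ((x, y), z)
      = μ.prob (fun ω => (X ω, Z ω)) (x, z) := by
  unfold prob
  rw [Finset.sum_comm]
  refine Finset.sum_congr rfl fun ω _ => ?_
  rw [Finset.sum_eq_single (Y ω)]
  · simp [Prod.ext_iff]
  · intro a _ ha
    rw [if_neg]
    intro hc
    exact ha (congrArg (fun p : (α × β) × γ => p.1.2) hc).symm
  · simp

lemma sum_prob_left (X : Ω → α) (Y : Ω → β) (Z : Ω → γ) (y : β) (z : γ) :
    ∑ x, μ.prob (fun ω => ((X ω, Y ω), Z ω)) ((x, y), z)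
      = μ.prob (fun ω => (Y ω, Z ω)) (y, z) := by
  unfold prob
  rw [Finset.sum_comm]
  refine Finset.sum_congr rfl fun ω _ => ?_
  rw [Finset.sum_eq_single (X ω)]
  · simp [Prod.ext_iff]
  · intro a _ ha
    rw [if_neg]
    intro hc
    exact ha (congrArg (fun p : (α × β) × γ => p.1.1) hc).symm
  · simp

lemma prob_triple_assoc (X : Ω → α) (Y : Ω → β) (Z : Ω → γ) (x : α) (y : β) (z : γ) :
    μ.prob (fun ω => (X ω, Y ω, Z ω)) (x, y, z)
      = μ.prob (fun ω => ((X ω, Y ω), Z ω)) ((x, y), z) := by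
  unfold prob
  refine Finset.sum_congr rfl fun ω _ => ?_
  simp [Prod.ext_iff, and_assoc]

lemma H_mul_log2 (X : Ω → α) :
    μ.H X * Real.log 2 = -∑ x, μ.prob X x * Real.log (μ.prob X x) := by
  have h2 : Real.log 2 ≠ 0 := ne_of_gt (Real.log_pos one_lt_two)
  unfold H Real.logb
  rw [neg_mul, Finset.sum_mul, neg_inj]
  refine Finset.sum_congr rfl fun x _ => ?_
  rw [mul_assoc, div_mul_cancel₀ _ h2]

lemma H_le_H_pair (X : Ω → α) (Z : Ω → γ) :
    μ.H Z ≤ μ.H (fun ω => (X ω, Z ω)) := by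
  have h2 : (0:ℝ) < Real.log 2 := Real.log_pos one_lt_two
  rw [← mul_le_mul_iff_of_pos_right h2, H_mul_log2, H_mul_log2]
  rw [neg_le_neg_iff]
  calc ∑ p : α × γ, μ.prob (fun ω => (X ω, Z ω)) p * Real.log (μ.prob (fun ω => (X ω, Z ω)) p)
      ≤ ∑ p : α × γ, μ.prob (fun ω => (X ω, Z ω)) p * Real.log (μ.prob Z p.2) := by
        refine Finset.sum_le_sum fun p _ => ?_
        rcases eq_or_lt_of_le (μ.prob_nonneg (fun ω => (X ω, Z ω)) p) with hp | hp
        · rw [← hp]; simp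
        · refine mul_le_mul_of_nonneg_left (Real.log_le_log hp ?_) hp.le
          have := μ.prob_comp_le (fun q : α × γ => q.2) (fun ω => (X ω, Z ω)) p
          simpa using this
    _ = ∑ z, μ.prob Z z * Real.log (μ.prob Z z) := by
        rw [Fintype.sum_prod_type, Finset.sum_comm]
        refine Finset.sum_congr rfl fun z _ => ?_
        dsimp only
        rw [← Finset.sum_mul, sum_prob_fst]

end FinProb
namespace FinProb

variable {Ω : Type} [Fintype Ω] (μ : FinProb Ω)
variable {α β γ : Type} [Fintype α] [DecidableEq α] [Fintype β] [DecidableEq β]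
  [Fintype γ] [DecidableEq γ]

lemma condI_mul_log2 (X : Ω → α) (Y : Ω → β) (Z : Ω → γ) :
    μ.condI X Y Z * Real.log 2 =
      ∑ x, ∑ y, ∑ z,
        μ.prob (fun ω => ((X ω, Y ω), Z ω)) ((x, y), z) *
          (Real.log (μ.prob (fun ω => ((X ω, Y ω), Z ω)) ((x, y), z))
            + Real.log (μ.prob Z z)
            - Real.log (μ.prob (fun ω => (X ω, Z ω)) (x, z))
            - Real.log (μ.prob (fun ω => (Y ω, Z ω)) (y, z))) := by
  have eC : μ.condI X Y Z = μ.H (fun ω => (X ω, Z ω)) + μ.H (fun ω => (Y ω, Z ω))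
      - μ.H (fun ω => ((X ω, Y ω), Z ω)) - μ.H Z := by
    unfold condI condH; ring
  have hA : ∑ x, ∑ y, ∑ z, μ.prob (fun ω => ((X ω, Y ω), Z ω)) ((x, y), z)
        * Real.log (μ.prob (fun ω => (X ω, Z ω)) (x, z))
      = ∑ q : α × γ, μ.prob (fun ω => (X ω, Z ω)) q
        * Real.log (μ.prob (fun ω => (X ω, Z ω)) q) := by
    rw [Fintype.sum_prod_type]
    refine Finset.sum_congr rfl fun x _ => ?_
    rw [Finset.sum_comm]
    refine Finset.sum_congr rfl fun z _ => ?_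
    rw [← Finset.sum_mul, sum_prob_mid]
  have hB : ∑ x, ∑ y, ∑ z, μ.prob (fun ω => ((X ω, Y ω), Z ω)) ((x, y), z)
        * Real.log (μ.prob (fun ω => (Y ω, Z ω)) (y, z))
      = ∑ q : β × γ, μ.prob (fun ω => (Y ω, Z ω)) q
        * Real.log (μ.prob (fun ω => (Y ω, Z ω)) q) := by
    rw [Finset.sum_comm, Fintype.sum_prod_type]
    refine Finset.sum_congr rfl fun y _ => ?_
    rw [Finset.sum_comm]
    refine Finset.sum_congr rfl fun z _ => ?_
    rw [← Finset.sum_mul, sum_prob_left]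
  have hC : ∑ x, ∑ y, ∑ z, μ.prob (fun ω => ((X ω, Y ω), Z ω)) ((x, y), z)
        * Real.log (μ.prob Z z)
      = ∑ z, μ.prob Z z * Real.log (μ.prob Z z) := by
    have step1 : ∑ x, ∑ y, ∑ z, μ.prob (fun ω => ((X ω, Y ω), Z ω)) ((x, y), z)
          * Real.log (μ.prob Z z)
        = ∑ z, ∑ x, ∑ y, μ.prob (fun ω => ((X ω, Y ω), Z ω)) ((x, y), z)
          * Real.log (μ.prob Z z) := by
      rw [show (∑ x, ∑ y, ∑ z, μ.prob (fun ω => ((X ω, Y ω), Z ω)) ((x, y), z)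
          * Real.log (μ.prob Z z))
        = ∑ x, ∑ z, ∑ y, μ.prob (fun ω => ((X ω, Y ω), Z ω)) ((x, y), z)
          * Real.log (μ.prob Z z) from
        Finset.sum_congr rfl fun x _ => Finset.sum_comm]
      exact Finset.sum_comm
    rw [step1]
    refine Finset.sum_congr rfl fun z _ => ?_
    have step2 : ∀ x, ∑ y, μ.prob (fun ω => ((X ω, Y ω), Z ω)) ((x, y), z)
          * Real.log (μ.prob Z z)
        = μ.prob (fun ω => (X ω, Z ω)) (x, z) * Real.log (μ.prob Z z) := by
      intro x
      rw [← Finset.sum_mul, sum_prob_mid]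
    rw [Finset.sum_congr rfl fun x _ => step2 x, ← Finset.sum_mul, sum_prob_fst]
  have hD : ∑ x, ∑ y, ∑ z, μ.prob (fun ω => ((X ω, Y ω), Z ω)) ((x, y), z)
        * Real.log (μ.prob (fun ω => ((X ω, Y ω), Z ω)) ((x, y), z))
      = ∑ q : (α × β) × γ, μ.prob (fun ω => ((X ω, Y ω), Z ω)) q
        * Real.log (μ.prob (fun ω => ((X ω, Y ω), Z ω)) q) := by
    rw [Fintype.sum_prod_type, Fintype.sum_prod_type]
  have := μ.H_mul_log2 (fun ω => (X ω, Z ω))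
  simp only [mul_add, mul_sub, Finset.sum_add_distrib, Finset.sum_sub_distrib, hA, hB, hC, hD]
  rw [eC, sub_mul, sub_mul, add_mul, H_mul_log2, H_mul_log2, H_mul_log2, H_mul_log2]
  ring

end FinProb
lemma gibbs {ι : Type} [Fintype ι] (p q : ι → ℝ) (hp : ∀ i, 0 ≤ p i)
    (hq : ∀ i, 0 ≤ q i) (habs : ∀ i, 0 < p i → 0 < q i)
    (hsum : ∑ i, q i ≤ ∑ i, p i) :
    ∑ i, p i * Real.log (q i / p i) ≤ 0 := by
  have key : ∀ i, p i * Real.log (q i / p i) ≤ q i - p i := by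
    intro i
    rcases eq_or_lt_of_le (hp i) with h | h
    · rw [← h]; simpa using hq i
    · have hqi := habs i h
      have hd : 0 < q i / p i := div_pos hqi h
      have hlog := Real.log_le_sub_one_of_pos hd
      calc p i * Real.log (q i / p i) ≤ p i * (q i / p i - 1) :=
            mul_le_mul_of_nonneg_left hlog h.le
        _ = q i - p i := by field_simp
  calc ∑ i, p i * Real.log (q i / p i) ≤ ∑ i, (q i - p i) :=
        Finset.sum_le_sum fun i _ => key i
    _ = ∑ i, q i - ∑ i, p i := Finset.sum_sub_distrib _ _
    _ ≤ 0 := by linarith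

def rotEquiv (A B C : Type) : (A × B) × C ≃ (C × B) × A :=
  ⟨fun p => ((p.2, p.1.2), p.1.1), fun p => ((p.2, p.1.2), p.1.1),
    fun p => rfl, fun p => rfl⟩

def permEquiv (A B C : Type) : (A × B) × C ≃ (B × C) × A :=
  ⟨fun p => ((p.1.2, p.2), p.1.1), fun q => ((q.2, q.1.1), q.1.2),
    fun p => rfl, fun q => rfl⟩

namespace FinProb

variable {Ω : Type} [Fintype Ω] (μ : FinProb Ω)
variable {α β γ : Type} [Fintype α] [DecidableEq α] [Fintype β] [DecidableEq β]
  [Fintype γ] [DecidableEq γ]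

lemma H_rot (X : Ω → α) (Y : Ω → β) (Z : Ω → γ) :
    μ.H (fun ω => ((X ω, Y ω), Z ω)) = μ.H (fun ω => ((Z ω, Y ω), X ω)) := by
  have h := μ.H_equiv (rotEquiv α β γ) (fun ω => ((X ω, Y ω), Z ω))
  simpa [rotEquiv] using h.symm

lemma H_perm (X : Ω → α) (Y : Ω → β) (Z : Ω → γ) :
    μ.H (fun ω => ((X ω, Y ω), Z ω)) = μ.H (fun ω => ((Y ω, Z ω), X ω)) := by
  have h := μ.H_equiv (permEquiv α β γ) (fun ω => ((X ω, Y ω), Z ω))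
  simpa [permEquiv] using h.symm

lemma H_assoc (X : Ω → α) (Y : Ω → β) (Z : Ω → γ) :
    μ.H (fun ω => ((X ω, Y ω), Z ω)) = μ.H (fun ω => (X ω, (Y ω, Z ω))) := by
  have h := μ.H_equiv (Equiv.prodAssoc α β γ) (fun ω => ((X ω, Y ω), Z ω))
  simpa using h.symm

lemma prob_triple_le_Z (X : Ω → α) (Y : Ω → β) (Z : Ω → γ) (x : α) (y : β) (z : γ) :
    μ.prob (fun ω => ((X ω, Y ω), Z ω)) ((x, y), z) ≤ μ.prob Z z := by
  have := μ.prob_comp_le (fun q : (α × β) × γ => q.2) (fun ω => ((X ω, Y ω), Z ω)) ((x, y), z)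
  simpa using this

lemma prob_triple_le_XZ (X : Ω → α) (Y : Ω → β) (Z : Ω → γ) (x : α) (y : β) (z : γ) :
    μ.prob (fun ω => ((X ω, Y ω), Z ω)) ((x, y), z)
      ≤ μ.prob (fun ω => (X ω, Z ω)) (x, z) := by
  have := μ.prob_comp_le (fun q : (α × β) × γ => (q.1.1, q.2))
    (fun ω => ((X ω, Y ω), Z ω)) ((x, y), z)
  simpa using this

lemma prob_triple_le_YZ (X : Ω → α) (Y : Ω → β) (Z : Ω → γ) (x : α) (y : β) (z : γ) :
    μ.prob (fun ω => ((X ω, Y ω), Z ω)) ((x, y), z)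
      ≤ μ.prob (fun ω => (Y ω, Z ω)) (y, z) := by
  have := μ.prob_comp_le (fun q : (α × β) × γ => (q.1.2, q.2))
    (fun ω => ((X ω, Y ω), Z ω)) ((x, y), z)
  simpa using this

end FinProb
namespace FinProb

variable {Ω : Type} [Fintype Ω] (μ : FinProb Ω)
variable {α β γ : Type} [Fintype α] [DecidableEq α] [Fintype β] [DecidableEq β]
  [Fintype γ] [DecidableEq γ]

lemma condI_markov_zero (X : Ω → α) (Y : Ω → β) (Z : Ω → γ)
    (h : μ.CondIndep X Y Z) : μ.condI X Y Z = 0 := by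
  have h2 : Real.log 2 ≠ 0 := ne_of_gt (Real.log_pos one_lt_two)
  have key : μ.condI X Y Z * Real.log 2 = 0 := by
    rw [condI_mul_log2]
    refine Finset.sum_eq_zero fun x _ => Finset.sum_eq_zero fun y _ =>
      Finset.sum_eq_zero fun z _ => ?_
    rcases eq_or_lt_of_le (μ.prob_nonneg (fun ω => ((X ω, Y ω), Z ω)) ((x, y), z)) with hP | hP
    · rw [← hP]; ring
    · have hPz : 0 < μ.prob Z z := lt_of_lt_of_le hP (μ.prob_triple_le_Z X Y Z x y z)
      have hXZ : 0 < μ.prob (fun ω => (X ω, Z ω)) (x, z) :=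
        lt_of_lt_of_le hP (μ.prob_triple_le_XZ X Y Z x y z)
      have hYZ : 0 < μ.prob (fun ω => (Y ω, Z ω)) (y, z) :=
        lt_of_lt_of_le hP (μ.prob_triple_le_YZ X Y Z x y z)
      have hind := h x y z
      rw [prob_triple_assoc] at hind
      have hlog : Real.log (μ.prob (fun ω => ((X ω, Y ω), Z ω)) ((x, y), z))
          + Real.log (μ.prob Z z)
          = Real.log (μ.prob (fun ω => (X ω, Z ω)) (x, z))
            + Real.log (μ.prob (fun ω => (Y ω, Z ω)) (y, z)) := by
        rw [← Real.log_mul hP.ne' hPz.ne', ← Real.log_mul hXZ.ne' hYZ.ne', hind]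
      linear_combination (μ.prob (fun ω => ((X ω, Y ω), Z ω)) ((x, y), z)) * hlog
  rcases mul_eq_zero.mp key with h' | h'
  · exact h'
  · exact absurd h' h2

lemma condI_nonneg (X : Ω → α) (Y : Ω → β) (Z : Ω → γ) : 0 ≤ μ.condI X Y Z := by
  have h2 : (0:ℝ) < Real.log 2 := Real.log_pos one_lt_two
  have key : 0 ≤ μ.condI X Y Z * Real.log 2 := by
    rw [condI_mul_log2]
    have hgibbs := gibbs (fun i : (α × β) × γ => μ.prob (fun ω => ((X ω, Y ω), Z ω)) i)
      (fun i : (α × β) × γ =>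
        if μ.prob Z i.2 = 0 then 0
        else μ.prob (fun ω => (X ω, Z ω)) (i.1.1, i.2)
          * μ.prob (fun ω => (Y ω, Z ω)) (i.1.2, i.2) / μ.prob Z i.2)
      (fun i => μ.prob_nonneg _ i)
      (fun i => by
        split
        · exact le_refl 0
        · have hz : 0 < μ.prob Z i.2 :=
            lt_of_le_of_ne (μ.prob_nonneg Z i.2) (Ne.symm (by assumption))
          exact div_nonneg (mul_nonneg (μ.prob_nonneg _ _) (μ.prob_nonneg _ _)) hz.le)
      (fun i hi => by
        have hPz : 0 < μ.prob Z i.2 :=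
          lt_of_lt_of_le hi (by simpa using μ.prob_triple_le_Z X Y Z i.1.1 i.1.2 i.2)
        rw [if_neg hPz.ne']
        have hXZ : 0 < μ.prob (fun ω => (X ω, Z ω)) (i.1.1, i.2) :=
          lt_of_lt_of_le hi (by simpa using μ.prob_triple_le_XZ X Y Z i.1.1 i.1.2 i.2)
        have hYZ : 0 < μ.prob (fun ω => (Y ω, Z ω)) (i.1.2, i.2) :=
          lt_of_lt_of_le hi (by simpa using μ.prob_triple_le_YZ X Y Z i.1.1 i.1.2 i.2)
        exact div_pos (mul_pos hXZ hYZ) hPz)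
      (by
        -- sum of q ≤ sum of p = 1
        have hsq : (∑ i : (α × β) × γ,
            if μ.prob Z i.2 = 0 then 0
            else μ.prob (fun ω => (X ω, Z ω)) (i.1.1, i.2)
              * μ.prob (fun ω => (Y ω, Z ω)) (i.1.2, i.2) / μ.prob Z i.2) = 1 := by
          rw [Fintype.sum_prod_type, Finset.sum_comm, ← μ.sum_prob Z]
          refine Finset.sum_congr rfl fun z _ => ?_
          dsimp only
          by_cases hz : μ.prob Z z = 0
          · simp [hz]
          · simp only [if_neg hz]
            have hcol : (∑ p : α × β, μ.prob (fun ω => (X ω, Z ω)) (p.1, z)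
                * μ.prob (fun ω => (Y ω, Z ω)) (p.2, z) / μ.prob Z z)
                = (μ.prob Z z * μ.prob Z z) / μ.prob Z z := by
              rw [← Finset.sum_div]
              congr 1
              rw [Fintype.sum_prod_type]
              have hx : ∀ x : α, (∑ y : β, μ.prob (fun ω => (X ω, Z ω)) (x, z)
                  * μ.prob (fun ω => (Y ω, Z ω)) (y, z))
                  = μ.prob (fun ω => (X ω, Z ω)) (x, z) * μ.prob Z z := by
                intro x
                rw [← Finset.mul_sum, sum_prob_fst]
              rw [Finset.sum_congr rfl fun x _ => hx x, ← Finset.sum_mul, sum_prob_fst]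
            rw [hcol, mul_div_assoc, div_self hz, mul_one]
        rw [hsq, μ.sum_prob (fun ω => ((X ω, Y ω), Z ω))])
    have main : (∑ x, ∑ y, ∑ z,
        μ.prob (fun ω => ((X ω, Y ω), Z ω)) ((x, y), z) *
          (Real.log (μ.prob (fun ω => ((X ω, Y ω), Z ω)) ((x, y), z))
            + Real.log (μ.prob Z z)
            - Real.log (μ.prob (fun ω => (X ω, Z ω)) (x, z))
            - Real.log (μ.prob (fun ω => (Y ω, Z ω)) (y, z))))
        = -∑ i : (α × β) × γ, μ.prob (fun ω => ((X ω, Y ω), Z ω)) i *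
            Real.log ((if μ.prob Z i.2 = 0 then 0
              else μ.prob (fun ω => (X ω, Z ω)) (i.1.1, i.2)
                * μ.prob (fun ω => (Y ω, Z ω)) (i.1.2, i.2) / μ.prob Z i.2)
              / μ.prob (fun ω => ((X ω, Y ω), Z ω)) i) := by
      rw [Fintype.sum_prod_type, Fintype.sum_prod_type, ← Finset.sum_neg_distrib]
      refine Finset.sum_congr rfl fun x _ => ?_
      rw [← Finset.sum_neg_distrib]
      refine Finset.sum_congr rfl fun y _ => ?_
      rw [← Finset.sum_neg_distrib]
      refine Finset.sum_congr rfl fun z _ => ?_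
      dsimp only
      rcases eq_or_lt_of_le (μ.prob_nonneg (fun ω => ((X ω, Y ω), Z ω)) ((x, y), z)) with hP | hP
      · rw [← hP]; ring
      · have hPz : 0 < μ.prob Z z := lt_of_lt_of_le hP (μ.prob_triple_le_Z X Y Z x y z)
        have hXZ : 0 < μ.prob (fun ω => (X ω, Z ω)) (x, z) :=
          lt_of_lt_of_le hP (μ.prob_triple_le_XZ X Y Z x y z)
        have hYZ : 0 < μ.prob (fun ω => (Y ω, Z ω)) (y, z) :=
          lt_of_lt_of_le hP (μ.prob_triple_le_YZ X Y Z x y z)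
        rw [if_neg hPz.ne']
        rw [Real.log_div (by positivity) hP.ne', Real.log_div (by positivity) hPz.ne',
          Real.log_mul hXZ.ne' hYZ.ne']
        ring
    rw [main]
    linarith [hgibbs]
  nlinarith [key, h2]

end FinProb

theorem stmt19 {Ω S Yb Yf Xb : Type} [Fintype Ω]
    [Fintype S] [DecidableEq S] [Fintype Yb] [DecidableEq Yb]
    [Fintype Yf] [DecidableEq Yf] [Fintype Xb] [DecidableEq Xb]
    (μ : FinProb Ω) (s : Ω → S) (yb : Ω → Yb) (yf : Ω → Yf) (xb : Ω → Xb)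
    (h : μ.CondIndep yf yb xb) :
    μ.I (fun ω => (yb ω, s ω)) yf - μ.condI s yf yb ≤ μ.I xb yb ∧
      μ.I (fun ω => (yb ω, s ω)) yf - μ.condH s yb ≤ μ.I xb yb := by
  have e0 : μ.condI yf yb xb = 0 := μ.condI_markov_zero yf yb xb h
  have e1 : 0 ≤ μ.condI xb yb yf := μ.condI_nonneg xb yb yf
  have eqA := μ.H_swap yb yf
  have eqB := μ.H_swap xb yf
  have eqC := μ.H_swap yb xb
  have eqD := μ.H_rot xb yb yf
  have eqE := μ.H_swap yb s
  have eqF := μ.H_perm yb s yf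
  have ineqG : μ.H (fun ω => (yf ω, yb ω)) ≤ μ.H (fun ω => ((s ω, yf ω), yb ω)) := by
    have hle := μ.H_le_H_pair s (fun ω => (yf ω, yb ω))
    have heq := μ.H_assoc s yf yb
    linarith
  simp only [FinProb.I, FinProb.condI, FinProb.condH] at e0 e1 ⊢
  constructor <;> linarith
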